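/- Let g: V̄ → ℝ with Σ_v g(v) = 0 realize λ₁(Ḡ) for a finite graph Ḡ, and let Γ be a metric graph with model Ḡ in which disjoint disks B(v) of equal volume 1/16 surround each vertex and the complementary segments have length between 1/8 and 1/2. Define f on Γ to equal g(v) on B(v) and linear interpolation on segments, and let m be the mean of f. Then ∫_Γ f'² dx ≤ 8 Σ_{{u,v} ∈ Ē}(g(u) − g(v))² and ∫_Γ (f − m)² dx ≥ (1/16) Σ_v g(v)², hence λ₁(Γ) ≤ 128·λ₁(Ḡ). -/

import Mathlib

open Finset MeasureTheory

/-- Dirichlet energy of `g`: sum of `(g u - g v)²` over the edges of `G`. -/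
noncomputable def edgeEnergy {V : Type*} [Fintype V] [DecidableEq V]
    (G : SimpleGraph V) [DecidableRel G.Adj] (g : V → ℝ) : ℝ :=
  ∑ e ∈ G.edgeFinset,
    Sym2.lift ⟨fun u v => (g u - g v) ^ 2, fun u v => by ring⟩ e

/-- The smallest nonzero discrete Laplacian eigenvalue, via the variational
characterization over mean-zero test functions. -/
noncomputable def lambdaOne {V : Type*} [Fintype V] [DecidableEq V]
    (G : SimpleGraph V) [DecidableRel G.Adj] : ℝ :=
  sInf {r | ∃ g : V → ℝ, (∑ v, g v) = 0 ∧ g ≠ 0 ∧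
    r = edgeEnergy G g / ∑ v, (g v) ^ 2}

/-- comparison of the metric-graph and discrete Rayleigh
quotients.  `g` is a mean-zero minimizer realizing `λ₁(Ḡ)`; the metric graph
`Γ` is modelled by a measure space `X` with pairwise disjoint vertex disks
`B v` of volume `1/16`, the remaining segments `I_e` inside an edge `e` having
length `ℓ e ∈ [1/8, 1/2]`; `f` equals `g v` on `B v` and interpolates linearly
on the segments, so that its Dirichlet energy is
`Ef = ∑_e (g u − g v)²/ℓ e`; `m` is the mean of `f`, and `λ₁(Γ) ≤ Ef/∫(f−m)²`
by the variational characterization.  Then `Ef ≤ 8·∑_e (g u − g v)²`,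
`∫(f−m)² ≥ (1/16)·∑ g(v)²`, and hence `λ₁(Γ) ≤ 128·λ₁(Ḡ)`. -/
theorem metric_graph_spectral_comparison {V : Type*} [Fintype V] [DecidableEq V]
    (Gbar : SimpleGraph V) [DecidableRel Gbar.Adj]
    (g : V → ℝ) (hg0 : ∑ v, g v = 0) (hgne : g ≠ 0)
    (hgopt : lambdaOne Gbar = edgeEnergy Gbar g / ∑ v, (g v) ^ 2)
    {X : Type*} [MeasurableSpace X] (μ : Measure X)
    (B : V → Set X) (hBmeas : ∀ v, MeasurableSet (B v))
    (hBdisj : Pairwise (Function.onFun Disjoint B))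
    (hBvol : ∀ v, μ (B v) = ENNReal.ofReal (1 / 16))
    (f : X → ℝ) (hfB : ∀ v, ∀ x ∈ B v, f x = g v)
    (ℓ : Sym2 V → ℝ) (hℓ : ∀ e ∈ Gbar.edgeSet, 1 / 8 ≤ ℓ e ∧ ℓ e ≤ 1 / 2)
    (Ef : ℝ)
    (hEf : Ef = ∑ e ∈ Gbar.edgeFinset,
      (Sym2.lift ⟨fun u v => (g u - g v) ^ 2, fun u v => by ring⟩ e) / ℓ e)
    (m : ℝ) (hm : m = (∫ x, f x ∂μ) / (μ Set.univ).toReal)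
    (hf2 : Integrable (fun x => (f x - m) ^ 2) μ)
    (lamΓ : ℝ) (hlamΓ : lamΓ ≤ Ef / ∫ x, (f x - m) ^ 2 ∂μ) :
    Ef ≤ 8 * edgeEnergy Gbar g ∧
      (1 / 16) * ∑ v, (g v) ^ 2 ≤ ∫ x, (f x - m) ^ 2 ∂μ ∧
      lamΓ ≤ 128 * lambdaOne Gbar := by

  classical
  set S : ℝ := ∑ v, (g v) ^ 2 with hS
  set E : ℝ := edgeEnergy Gbar g with hE
  -- positivity of S
  have hSpos : 0 < S := by
    rcases Function.ne_iff.mp hgne with ⟨v, hv⟩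
    have : (0:ℝ) < (g v)^2 := lt_of_le_of_ne (sq_nonneg _) (Ne.symm (pow_ne_zero 2 hv))
    exact Finset.sum_pos' (fun i _ => sq_nonneg _) ⟨v, Finset.mem_univ v, this⟩
  -- nonnegativity of each lift term
  have hlift : ∀ e : Sym2 V, 0 ≤ Sym2.lift ⟨fun u v => (g u - g v) ^ 2, fun u v => by ring⟩ e := by
    intro e
    induction e using Sym2.ind with
    | _ u v => simpa using sq_nonneg (g u - g v)
  have hEnonneg : 0 ≤ E := Finset.sum_nonneg fun e _ => hlift e
  -- Part 1
  have part1 : Ef ≤ 8 * E := by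
    rw [hEf, hE, edgeEnergy, Finset.mul_sum]
    refine Finset.sum_le_sum fun e he => ?_
    have heS := (Gbar.mem_edgeFinset).mp he
    obtain ⟨h1, h2⟩ := hℓ e heS
    have hl := hlift e
    have hℓpos : (0:ℝ) < ℓ e := by linarith
    rw [div_le_iff₀ hℓpos]
    nlinarith
  -- Part 2
  have hint : ∀ v, ∫ x in B v, (f x - m) ^ 2 ∂μ = (g v - m) ^ 2 * (1/16) := by
    intro v
    have h1 : ∫ x in B v, (f x - m) ^ 2 ∂μ = ∫ _x in B v, (g v - m) ^ 2 ∂μ := by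
      refine setIntegral_congr_fun (hBmeas v) fun x hx => ?_
      rw [hfB v x hx]
    rw [h1, setIntegral_const, measureReal_def, hBvol v, ENNReal.toReal_ofReal (by norm_num)]
    simp [mul_comm]
  have hsum : ∑ v, ∫ x in B v, (f x - m) ^ 2 ∂μ = ∫ x in ⋃ v, B v, (f x - m) ^ 2 ∂μ := by
    haveI : Countable V := Fintype.toEncodable V |>.countable
    rw [← tsum_fintype (L := SummationFilter.unconditional V)]
    exact (integral_iUnion hBmeas hBdisj hf2.integrableOn).symm
  have hle : ∫ x in ⋃ v, B v, (f x - m) ^ 2 ∂μ ≤ ∫ x, (f x - m) ^ 2 ∂μ :=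
    setIntegral_le_integral hf2 (Filter.Eventually.of_forall fun x => sq_nonneg _)
  have hSm : S ≤ ∑ v, (g v - m) ^ 2 := by
    have hexp : ∑ v, (g v - m) ^ 2 = S - 2 * m * (∑ v, g v) + (Fintype.card V) * m ^ 2 := by
      rw [hS, Finset.mul_sum, ← Finset.sum_sub_distrib]
      rw [show ((Fintype.card V : ℝ) * m ^ 2) = ∑ _v : V, m ^ 2 by
        simp [Finset.sum_const, mul_comm]]
      rw [← Finset.sum_add_distrib]
      exact Finset.sum_congr rfl fun v _ => by ring
    rw [hexp, hg0]
    have : (0:ℝ) ≤ (Fintype.card V) * m ^ 2 := by positivity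
    linarith
  have part2 : (1/16) * S ≤ ∫ x, (f x - m) ^ 2 ∂μ := by
    calc (1/16) * S ≤ (1/16) * ∑ v, (g v - m) ^ 2 := by linarith [hSm]
      _ = ∑ v, (g v - m) ^ 2 * (1/16) := by rw [Finset.mul_sum]; exact Finset.sum_congr rfl fun v _ => by ring
      _ = ∑ v, ∫ x in B v, (f x - m) ^ 2 ∂μ := by
          exact Finset.sum_congr rfl fun v _ => (hint v).symm
      _ = ∫ x in ⋃ v, B v, (f x - m) ^ 2 ∂μ := hsum
      _ ≤ ∫ x, (f x - m) ^ 2 ∂μ := hle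
  -- Part 3
  refine ⟨part1, part2, ?_⟩
  set I : ℝ := ∫ x, (f x - m) ^ 2 ∂μ with hI
  have hIpos : 0 < I := lt_of_lt_of_le (by positivity) part2
  have hEfnonneg : 0 ≤ Ef := by
    rw [hEf]
    refine Finset.sum_nonneg fun e he => ?_
    have heS := (Gbar.mem_edgeFinset).mp he
    obtain ⟨h1, h2⟩ := hℓ e heS
    exact div_nonneg (hlift e) (by linarith)
  have hstep : Ef / I ≤ (8 * E) / ((1/16) * S) := by
    refine div_le_div₀ (by positivity) part1 (by positivity) part2
  have hfinal : (8 * E) / ((1/16) * S) = 128 * (E / S) := by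
    field_simp
    ring
  calc lamΓ ≤ Ef / I := hlamΓ
    _ ≤ (8 * E) / ((1/16) * S) := hstep
    _ = 128 * (E / S) := hfinal
    _ = 128 * lambdaOne Gbar := by rw [hgopt]
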